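/- arXiv:1308.0998 — 7 statements merged into one kernel-verified Lean document; each statement's English description precedes it below -/
import Mathlib

section
/- Fix α, β > 0 and x₁, x₂ ∈ ℝ, and set y₁ = x + x₁, y₂ = x + x₂. Define the complex-valued function Q(x) = 2√2 (β + iα) e^{β y₂ + i α y₁} / (1 + e^{2(β y₂ + i α y₁)}), defined at all x where the denominator is nonzero. Then at every such x, Q''(x) - (β + iα)² Q(x) + Q(x)³ = 0. -/
open Complex

theorem stmt_2 (α β x₁ x₂ : ℝ) (hα : 0 < α) (hβ : 0 < β) (Q : ℝ → ℂ)
    (hQ : ∀ x : ℝ, Q x = 2 * Real.sqrt 2 * ((β : ℂ) + I * α) *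
      Complex.exp ((β : ℂ) * (x + x₂) + I * α * (x + x₁)) /
      (1 + Complex.exp (2 * ((β : ℂ) * (x + x₂) + I * α * (x + x₁)))))
    (x : ℝ)
    (hx : 1 + Complex.exp (2 * ((β : ℂ) * (x + x₂) + I * α * (x + x₁))) ≠ 0) :
    deriv (deriv Q) x - ((β : ℂ) + I * α) ^ 2 * Q x + Q x ^ 3 = 0 := by
  set k : ℂ := (β : ℂ) + I * α with hk
  set A : ℂ := 2 * (Real.sqrt 2 : ℝ) * k with hAdef
  set E : ℝ → ℂ := fun y : ℝ => Complex.exp ((β : ℂ) * ((y : ℂ) + x₂) + I * α * ((y : ℂ) + x₁)) with hEdef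
  have hexp2 : ∀ y : ℝ, Complex.exp (2 * ((β : ℂ) * ((y : ℂ) + x₂) + I * α * ((y : ℂ) + x₁))) = (E y) ^ 2 := by
    intro y; rw [two_mul, Complex.exp_add, sq]
  have hQfun : Q = fun y : ℝ => A * E y / (1 + (E y) ^ 2) := by
    funext y
    rw [hQ y, ← hexp2 y]
  have hx' : 1 + (E x) ^ 2 ≠ 0 := by rw [← hexp2 x]; exact hx
  subst hQfun
  -- derivative of E
  have hE : ∀ y : ℝ, HasDerivAt E (k * E y) y := by
    intro y
    have hc : HasDerivAt (fun y : ℝ => (y : ℂ)) 1 y := Complex.ofRealCLM.hasDerivAt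
    have h1 := ((hc.add_const ((x₂ : ℝ) : ℂ)).const_mul ((β : ℝ) : ℂ)).add
      ((hc.add_const ((x₁ : ℝ) : ℂ)).const_mul (I * ((α : ℝ) : ℂ)))
    have h2 : HasDerivAt (fun y : ℝ => (β : ℂ) * ((y : ℂ) + x₂) + I * α * ((y : ℂ) + x₁)) k y := by
      simpa [hk, mul_one, Pi.add_def] using h1
    have h3 := h2.cexp
    exact h3.congr_deriv (mul_comm _ _)
  -- first derivative
  have key : ∀ y : ℝ, 1 + (E y) ^ 2 ≠ 0 →
      HasDerivAt (fun y : ℝ => A * E y / (1 + (E y) ^ 2))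
        (A * k * (E y * (1 - (E y) ^ 2)) / ((1 + (E y) ^ 2) ^ 2) ) y := by
    intro y hy
    have hsq : HasDerivAt (fun y : ℝ => (E y) ^ 2) (k * E y * E y + E y * (k * E y)) y := by
      simpa [pow_two, Pi.mul_def] using (hE y).mul (hE y)
    have h : HasDerivAt (fun y : ℝ => A * E y / (1 + (E y) ^ 2)) _ y := ((hE y).const_mul A).div (hsq.const_add (1 : ℂ)) hy
    convert h using 1
    push_cast
    ring
  have hU : IsOpen {y : ℝ | 1 + (E y) ^ 2 ≠ 0} := by
    have hc : Continuous fun y : ℝ => 1 + (E y) ^ 2 := by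
      apply Continuous.add continuous_const
      apply Continuous.pow
      exact Complex.continuous_exp.comp (by fun_prop)
    exact isOpen_ne.preimage hc
  have hev : deriv (fun y : ℝ => A * E y / (1 + (E y) ^ 2)) =ᶠ[nhds x]
      fun y : ℝ => A * k * (E y * (1 - (E y) ^ 2)) / ((1 + (E y) ^ 2) ^ 2) := by
    filter_upwards [hU.mem_nhds hx'] with y hy
    exact (key y hy).deriv
  have hsq : HasDerivAt (fun y : ℝ => (E y) ^ 2) (k * E x * E x + E x * (k * E x)) x := by
    simpa [pow_two, Pi.mul_def] using (hE x).mul (hE x)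
  have hnum2 := ((hE x).mul ((hasDerivAt_const x (1 : ℂ)).sub hsq)).const_mul (A * k)
  have hden2in := hsq.const_add (1 : ℂ)
  have hden2 : HasDerivAt (fun y : ℝ => ((1 : ℂ) + (E y) ^ 2) ^ 2)
      ((k * E x * E x + E x * (k * E x)) * (1 + (E x) ^ 2) + (1 + (E x) ^ 2) * (k * E x * E x + E x * (k * E x))) x := by
    simpa [pow_two, Pi.mul_def] using hden2in.mul hden2in
  have hden2ne : ((1 + (E x) ^ 2) ^ 2) ≠ 0 := pow_ne_zero 2 hx'
  have hG := hnum2.div hden2 hden2ne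
  have hA2 : A ^ 2 = 8 * k ^ 2 := by
    have hs : ((Real.sqrt 2 : ℝ) : ℂ) ^ 2 = 2 := by
      rw [← Complex.ofReal_pow, Real.sq_sqrt (by norm_num : (0:ℝ) ≤ 2)]
      norm_num
    rw [hAdef]
    ring_nf
    linear_combination 4 * k ^ 2 * hs
  clear_value A k
  simp only []
  simp only [Pi.mul_apply, Pi.sub_apply] at hG
  rw [hev.deriv_eq, (show HasDerivAt (fun y => A * k * (E y * (1 - E y ^ 2)) / (1 + E y ^ 2) ^ 2) _ x from hG).deriv]
  have h9 : (A * k * (k * E x * (1 - E x ^ 2) + E x * (0 - (k * E x * E x + E x * (k * E x)))) * (1 + E x ^ 2) ^ 2 -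
        A * k * (E x * (1 - E x ^ 2)) *
          ((k * E x * E x + E x * (k * E x)) * (1 + E x ^ 2) + (1 + E x ^ 2) * (k * E x * E x + E x * (k * E x)))) /
      ((1 + E x ^ 2) ^ 2) ^ 2 - k ^ 2 * (A * E x / (1 + E x ^ 2)) + (A * E x / (1 + E x ^ 2)) ^ 3
      = (A * (E x) ^ 3 * (A ^ 2 - 8 * k ^ 2)) / ((1 + E x ^ 2) ^ 3) := by
    field_simp
    ring
  rw [h9, hA2]
  simp
end

section
/- With Q as the complex soliton profile Q(x) = 2√2 (β+iα) e^{β y₂ + iα y₁}/(1 + e^{2(β y₂ + iα y₁)}) (for α,β > 0, y₁ = x + x₁, y₂ = x + x₂), at every x where Q is defined one has the first-integral identity Q'(x)² - (β+iα)² Q(x)² + (1/2) Q(x)⁴ = 0. -/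
open Complex

theorem stmt_3 (α β x₁ x₂ : ℝ) (hα : 0 < α) (hβ : 0 < β) (Q : ℝ → ℂ)
    (hQ : ∀ x : ℝ, Q x = 2 * Real.sqrt 2 * ((β : ℂ) + I * α) *
      Complex.exp ((β : ℂ) * (x + x₂) + I * α * (x + x₁)) /
      (1 + Complex.exp (2 * ((β : ℂ) * (x + x₂) + I * α * (x + x₁)))))
    (x : ℝ)
    (hx : 1 + Complex.exp (2 * ((β : ℂ) * (x + x₂) + I * α * (x + x₁))) ≠ 0) :
    deriv Q x ^ 2 - ((β : ℂ) + I * α) ^ 2 * Q x ^ 2 + (1 / 2) * Q x ^ 4 = 0 := by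
  have hQf : Q = fun x : ℝ => 2 * Real.sqrt 2 * ((β : ℂ) + I * α) *
      Complex.exp ((β : ℂ) * (x + x₂) + I * α * (x + x₁)) /
      (1 + Complex.exp (2 * ((β : ℂ) * (x + x₂) + I * α * (x + x₁)))) := funext hQ
  set k : ℂ := (β : ℂ) + I * α with hk
  set c : ℂ := 2 * Real.sqrt 2 * k with hc
  have hre : HasDerivAt (fun t : ℝ => (t : ℂ)) 1 x := by
    exact (hasDerivAt_id x).ofReal_comp
  have hg : HasDerivAt (fun t : ℝ => (β : ℂ) * (t + x₂) + I * α * (t + x₁)) k x := by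
    have h1 : HasDerivAt (fun t : ℝ => ((t : ℂ) + x₂)) 1 x := hre.add_const _
    have h2 : HasDerivAt (fun t : ℝ => ((t : ℂ) + x₁)) 1 x := hre.add_const _
    have := (h1.const_mul (β : ℂ)).add (h2.const_mul (I * α))
    convert this using 1
    · rfl
    · rfl
    · simp [hk, mul_one]
  set g : ℂ := (β : ℂ) * (x + x₂) + I * α * (x + x₁) with hgdef
  have hE : HasDerivAt (fun t : ℝ => Complex.exp ((β : ℂ) * (t + x₂) + I * α * (t + x₁)))
      (Complex.exp g * k) x := hg.cexp
  have hD : HasDerivAt (fun t : ℝ => 1 + Complex.exp (2 * ((β : ℂ) * (t + x₂) + I * α * (t + x₁))))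
      (Complex.exp (2 * g) * (2 * k)) x := by
    simpa using ((hg.const_mul 2).cexp).const_add 1

  have hQ' : HasDerivAt Q
      ((c * (Complex.exp g * k) * (1 + Complex.exp (2 * g)) -
        c * Complex.exp g * (Complex.exp (2 * g) * (2 * k))) /
        (1 + Complex.exp (2 * g)) ^ 2) x := by
    rw [hQf]
    exact ((hE.const_mul c).div hD hx)
  rw [hQ'.deriv, hQ x]
  have hc2 : c ^ 2 = 8 * k ^ 2 := by
    have h2 : ((Real.sqrt 2 : ℝ) : ℂ) ^ 2 = 2 := by
      norm_cast
      exact Real.sq_sqrt (by norm_num)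
    rw [hc, mul_pow, mul_pow, h2]; ring
  have he2 : Complex.exp (2 * g) = Complex.exp g ^ 2 := by
    rw [two_mul, Complex.exp_add, sq]
  rw [he2] at hx ⊢
  set e : ℂ := Complex.exp g with he
  clear_value k c g e
  field_simp
  linear_combination (c ^ 2 * e ^ 4) * hc2
end

section
/- Let α, β > 0 and let Q(x) = 2√2 (β+iα) e^{(β + iα)x} / (1 + e^{2(β+iα)x}) be the complex soliton with shifts x₁ = x₂ = 0. Then Q is defined for every x ∈ ℝ (the denominator never vanishes), and the improper integral (1/2)∫_ℝ Q(x)² dx converges and equals 2(β + iα). -/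
open Complex MeasureTheory Real Set Filter Topology
namespace Stmt5Aux

noncomputable def cc (α β : ℝ) : ℂ := (β : ℂ) + I * α

lemma cc_def (α β : ℝ) : cc α β = (β : ℂ) + I * α := rfl

lemma re_eq (α β x : ℝ) : (2 * cc α β * x).re = 2 * β * x := by
  simp [cc, Complex.add_re, Complex.mul_re]

lemma norm_exp (α β x : ℝ) : ‖Complex.exp (2 * cc α β * x)‖ = Real.exp (2 * β * x) := by
  rw [Complex.norm_exp, re_eq]

lemma den_ne {β : ℝ} (α : ℝ) (hβ : 0 < β) (x : ℝ) :
    1 + Complex.exp (2 * cc α β * x) ≠ 0 := by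
  intro h
  have h1 : Complex.exp (2 * cc α β * x) = -1 := by linear_combination h
  have h2 : Real.exp (2 * β * x) = 1 := by
    rw [← re_eq α β x, ← Complex.norm_exp, h1]; simp
  have hx : x = 0 := by
    have := Real.exp_eq_one_iff (2 * β * x) |>.mp h2
    nlinarith
  rw [hx] at h1
  simp at h1
  norm_num at h1

noncomputable def FF (α β : ℝ) (x : ℝ) : ℂ := -4 * cc α β / (1 + Complex.exp (2 * cc α β * x))

noncomputable def ff (α β : ℝ) (x : ℝ) : ℂ :=
  8 * cc α β ^ 2 * Complex.exp (2 * cc α β * x) / (1 + Complex.exp (2 * cc α β * x)) ^ 2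

lemma hasDeriv {β : ℝ} (α : ℝ) (hβ : 0 < β) (x : ℝ) :
    HasDerivAt (FF α β) (ff α β x) x := by
  set c := cc α β with hc
  have h0 : HasDerivAt (fun x : ℝ => 2 * c * (x : ℂ)) (2 * c) x := by
    simpa using (Complex.ofRealCLM.hasDerivAt (x := x)).const_mul (2 * c)
  have hexp := h0.cexp
  have hden := hexp.const_add (1 : ℂ)
  have hne : (1 + Complex.exp (2 * c * (x:ℝ))) ≠ 0 := den_ne α hβ x
  have hg : HasDerivAt (fun z : ℂ => z⁻¹)
      (-(((1 : ℂ) + Complex.exp (2 * c * (x:ℝ))) ^ 2)⁻¹) (1 + Complex.exp (2 * c * (x:ℝ))) :=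
    hasDerivAt_inv hne
  have hcomp := (hg.hasFDerivAt.restrictScalars ℝ).comp_hasDerivAt x hden
  have := hcomp.const_mul (-4 * c)
  refine HasDerivAt.congr_deriv (f := FF α β) this ?_
  simp only [ff, ContinuousLinearMap.coe_restrictScalars',
      ContinuousLinearMap.toSpanSingleton_apply, smul_eq_mul]
  rw [← hc]
  field_simp
  ring

lemma cont_ff {β : ℝ} (α : ℝ) (hβ : 0 < β) : Continuous (ff α β) := by
  apply Continuous.div
  · exact continuous_const.mul (Complex.continuous_exp.comp
      (continuous_const.mul Complex.continuous_ofReal))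
  · exact (continuous_const.add (Complex.continuous_exp.comp
      (continuous_const.mul Complex.continuous_ofReal))).pow 2
  · exact fun x => pow_ne_zero 2 (den_ne α hβ x)

lemma norm_ff (α β : ℝ) (x : ℝ) :
    ‖ff α β x‖ = 8 * ‖cc α β‖ ^ 2 * Real.exp (2 * β * x) /
      ‖1 + Complex.exp (2 * cc α β * x)‖ ^ 2 := by
  simp only [ff, norm_div, norm_mul, norm_pow, norm_exp]
  norm_num

lemma tendsto_top {β : ℝ} (α : ℝ) (hβ : 0 < β) : Tendsto (FF α β) atTop (𝓝 0) := by
  rw [tendsto_zero_iff_norm_tendsto_zero]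
  have hD : Tendsto (fun x : ℝ => ‖1 + Complex.exp (2 * cc α β * x)‖) atTop atTop := by
    apply tendsto_atTop_mono (fun x => ?_)
      (tendsto_atTop_add_const_right atTop (-1)
        (Real.tendsto_exp_atTop.comp (tendsto_id.const_mul_atTop (by positivity : (0:ℝ) < 2*β))))
    have h1 := norm_sub_norm_le (Complex.exp (2 * cc α β * x)) (-1 : ℂ)
    rw [sub_neg_eq_add, add_comm] at h1
    simp only [Function.comp, norm_exp] at *
    simpa using h1
  have : (fun x : ℝ => ‖FF α β x‖) =
      fun x : ℝ => ‖(-4 : ℂ) * cc α β‖ / ‖1 + Complex.exp (2 * cc α β * x)‖ := by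
    funext x; rw [FF, norm_div]
  rw [this]
  exact tendsto_const_nhds.div_atTop hD

lemma tendsto_bot {β : ℝ} (α : ℝ) (hβ : 0 < β) :
    Tendsto (FF α β) atBot (𝓝 (-4 * cc α β)) := by
  have he : Tendsto (fun x : ℝ => Complex.exp (2 * cc α β * x)) atBot (𝓝 0) := by
    rw [tendsto_zero_iff_norm_tendsto_zero]
    simp only [norm_exp]
    exact Real.tendsto_exp_atBot.comp (tendsto_id.const_mul_atBot (by positivity : (0:ℝ) < 2*β))
  have hD : Tendsto (fun x : ℝ => 1 + Complex.exp (2 * cc α β * x)) atBot (𝓝 1) := by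
    simpa using tendsto_const_nhds.add he
  have h := Filter.Tendsto.div
    (tendsto_const_nhds : Tendsto (fun _ : ℝ => -4 * cc α β) atBot (𝓝 (-4 * cc α β))) hD one_ne_zero
  have : FF α β = (fun _ : ℝ => -4 * cc α β) / fun x : ℝ => 1 + Complex.exp (2 * cc α β * x) := rfl
  rw [this]
  simpa using h

lemma bound_Ioi {β : ℝ} (α : ℝ) (hβ : 0 < β) {x : ℝ} (hx : 1 ≤ x) :
    ‖ff α β x‖ ≤ 8 * ‖cc α β‖ ^ 2 / (1 - Real.exp (-(2 * β))) ^ 2 * Real.exp (-(2 * β) * x) := by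
  rw [norm_ff]
  set n := ‖cc α β‖ ^ 2 with hn
  set a := Real.exp (2 * β * x) with ha
  set s := Real.exp (-(2 * β)) with hs
  set d := ‖1 + Complex.exp (2 * cc α β * x)‖ with hd
  have hn0 : 0 ≤ n := by positivity
  have ha0 : 0 < a := Real.exp_pos _
  have hs0 : 0 < s := Real.exp_pos _
  have hs1 : s < 1 := by
    rw [hs]; apply Real.exp_lt_one_iff.mpr; nlinarith
  have hd0 : 0 < d := by
    rw [hd]; exact norm_pos_iff.mpr (den_ne α hβ x)
  have had : a - 1 ≤ d := by
    have h1 := norm_sub_norm_le (Complex.exp (2 * cc α β * x)) (-1 : ℂ)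
    rw [sub_neg_eq_add, add_comm, norm_neg, norm_one, norm_exp] at h1
    exact h1
  have has : 1 ≤ a * s := by
    rw [ha, hs, ← Real.exp_add]
    exact Real.one_le_exp (by nlinarith)
  have h5 : a * (1 - s) ≤ d := by nlinarith
  have key : (a * (1 - s)) ^ 2 ≤ d ^ 2 := pow_le_pow_left₀ (by nlinarith) h5 2
  have hax : Real.exp (-(2 * β) * x) = a⁻¹ := by
    rw [ha, ← Real.exp_neg]; ring_nf
  rw [hax, ← div_eq_mul_inv, div_div,
    div_le_div_iff₀ (by positivity)
      (mul_pos (pow_pos (by linarith : (0:ℝ) < 1 - s) 2) ha0)]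
  nlinarith [mul_le_mul_of_nonneg_left key (by positivity : (0:ℝ) ≤ 8 * n)]

lemma bound_Iio {β : ℝ} (α : ℝ) (hβ : 0 < β) {x : ℝ} (hx : x ≤ -1) :
    ‖ff α β x‖ ≤ 8 * ‖cc α β‖ ^ 2 / (1 - Real.exp (-(2 * β))) ^ 2 * Real.exp (2 * β * x) := by
  rw [norm_ff]
  set n := ‖cc α β‖ ^ 2 with hn
  set a := Real.exp (2 * β * x) with ha
  set s := Real.exp (-(2 * β)) with hs
  set d := ‖1 + Complex.exp (2 * cc α β * x)‖ with hd
  have hn0 : 0 ≤ n := by positivity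
  have ha0 : 0 < a := Real.exp_pos _
  have hs0 : 0 < s := Real.exp_pos _
  have hs1 : s < 1 := by
    rw [hs]; apply Real.exp_lt_one_iff.mpr; nlinarith
  have hd0 : 0 < d := by
    rw [hd]; exact norm_pos_iff.mpr (den_ne α hβ x)
  have has : a ≤ s := by rw [ha, hs]; exact Real.exp_le_exp.mpr (by nlinarith)
  have h1d : 1 - a ≤ d := by
    have h1 := norm_sub_norm_le (1 : ℂ) (-Complex.exp (2 * cc α β * x))
    rw [sub_neg_eq_add, norm_neg, norm_one, norm_exp] at h1
    exact h1
  have h5 : 1 - s ≤ d := by nlinarith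
  have key : (1 - s) ^ 2 ≤ d ^ 2 := pow_le_pow_left₀ (by nlinarith) h5 2
  rw [div_mul_eq_mul_div, div_le_div_iff₀ (by positivity)
    (pow_pos (by linarith : (0:ℝ) < 1 - s) 2)]
  nlinarith [mul_le_mul_of_nonneg_left key (by positivity : (0:ℝ) ≤ 8 * n * a)]

lemma integrable_ff {β : ℝ} (α : ℝ) (hβ : 0 < β) : Integrable (ff α β) := by
  have hb : (0:ℝ) < 2 * β := by positivity
  set K := 8 * ‖cc α β‖ ^ 2 / (1 - Real.exp (-(2 * β))) ^ 2 with hK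
  have hmeas : AEStronglyMeasurable (ff α β) (volume : Measure ℝ) :=
    (cont_ff α hβ).aestronglyMeasurable
  have hIoi : IntegrableOn (ff α β) (Ioi 1) := by
    apply Integrable.mono' (((exp_neg_integrableOn_Ioi 1 hb)).const_mul K)
      (hmeas.restrict)
    filter_upwards [ae_restrict_mem measurableSet_Ioi] with x hx
    exact bound_Ioi α hβ (le_of_lt hx)
  have hIio : IntegrableOn (ff α β) (Iio (-1)) := by
    have h1 : IntegrableOn (fun x : ℝ => Real.exp (-(2*β) * x)) (Ioi 1) :=
      exp_neg_integrableOn_Ioi 1 hb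
    have h2 := (MeasurePreserving.integrableOn_comp_preimage
      (Measure.measurePreserving_neg (volume : Measure ℝ))
      (Homeomorph.neg ℝ).measurableEmbedding).2 h1
    have h3 : IntegrableOn (fun x : ℝ => Real.exp (2 * β * x)) (Iio (-1)) := by
      have hset : (Neg.neg ⁻¹' Ioi (1:ℝ)) = Iio (-1) := by
        ext y; simp [lt_neg]
      have hfun : ((fun x : ℝ => Real.exp (-(2*β) * x)) ∘ Neg.neg)
          = fun x : ℝ => Real.exp (2 * β * x) := by
        funext y; simp [Function.comp]
      rwa [hset, hfun] at h2
    apply Integrable.mono' (h3.const_mul K) (hmeas.restrict)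
    filter_upwards [ae_restrict_mem measurableSet_Iio] with x hx
    exact bound_Iio α hβ (le_of_lt hx)
  have hmid : IntegrableOn (ff α β) (Icc (-1) 1) :=
    (cont_ff α hβ).integrableOn_Icc
  rw [← integrableOn_univ]
  apply (hIio.union (hmid.union hIoi)).mono_set
  intro x _
  rcases lt_or_ge x (-1) with h | h
  · exact Or.inl h
  rcases le_or_gt x 1 with h' | h'
  · exact Or.inr (Or.inl ⟨h, h'⟩)
  · exact Or.inr (Or.inr h')

lemma Qsq {β : ℝ} (α : ℝ) (hβ : 0 < β) (Q : ℝ → ℂ)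
    (hQ : ∀ x : ℝ, Q x = 2 * Real.sqrt 2 * cc α β *
      Complex.exp (cc α β * x) / (1 + Complex.exp (2 * cc α β * x))) (x : ℝ) :
    Q x ^ 2 = ff α β x := by
  have h2 : ((Real.sqrt 2 : ℝ) : ℂ) ^ 2 = 2 := by
    norm_cast
    exact Real.sq_sqrt (by norm_num)
  have he : Complex.exp (cc α β * x) ^ 2 = Complex.exp (2 * cc α β * x) := by
    rw [sq, ← Complex.exp_add]; ring_nf
  rw [hQ x, ff, div_pow]
  congr 1
  rw [mul_pow, mul_pow, mul_pow, he, h2]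
  ring

lemma FF_zero (α β : ℝ) : FF α β 0 = -2 * cc α β := by
  have h0 : ((0:ℝ):ℂ) = 0 := by norm_num
  rw [FF, h0, mul_zero, Complex.exp_zero]
  rw [div_eq_iff (by norm_num : (1:ℂ)+1 ≠ 0)]
  ring

end Stmt5Aux


theorem stmt_5 (α β : ℝ) (hα : 0 < α) (hβ : 0 < β) (Q : ℝ → ℂ)
    (hQ : ∀ x : ℝ, Q x = 2 * Real.sqrt 2 * ((β : ℂ) + I * α) *
      Complex.exp (((β : ℂ) + I * α) * x) / (1 + Complex.exp (2 * ((β : ℂ) + I * α) * x))) :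
    (∀ x : ℝ, 1 + Complex.exp (2 * ((β : ℂ) + I * α) * x) ≠ 0) ∧
    MeasureTheory.Integrable (fun x : ℝ => Q x ^ 2) ∧
    (1 / 2 : ℂ) * ∫ x : ℝ, Q x ^ 2 = 2 * ((β : ℂ) + I * α) := by
  have hQ' : ∀ x : ℝ, Q x = 2 * Real.sqrt 2 * Stmt5Aux.cc α β *
      Complex.exp (Stmt5Aux.cc α β * x) / (1 + Complex.exp (2 * Stmt5Aux.cc α β * x)) := hQ
  have hsq : ∀ x : ℝ, Q x ^ 2 = Stmt5Aux.ff α β x := Stmt5Aux.Qsq α hβ Q hQ'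
  have hintff := Stmt5Aux.integrable_ff α hβ
  have hint : Integrable (fun x : ℝ => Q x ^ 2) := by
    simp only [hsq]; exact hintff
  refine ⟨fun x => Stmt5Aux.den_ne α hβ x, hint, ?_⟩
  have e1 : ∫ x in Iic (0:ℝ), Stmt5Aux.ff α β x
      = Stmt5Aux.FF α β 0 - (-4 * Stmt5Aux.cc α β) :=
    MeasureTheory.integral_Iic_of_hasDerivAt_of_tendsto'
      (fun x _ => Stmt5Aux.hasDeriv α hβ x) hintff.integrableOn (Stmt5Aux.tendsto_bot α hβ)
  have e2 : ∫ x in Ioi (0:ℝ), Stmt5Aux.ff α β x = 0 - Stmt5Aux.FF α β 0 :=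
    MeasureTheory.integral_Ioi_of_hasDerivAt_of_tendsto'
      (fun x _ => Stmt5Aux.hasDeriv α hβ x) hintff.integrableOn (Stmt5Aux.tendsto_top α hβ)
  have etot : ∫ x : ℝ, Q x ^ 2 = 4 * Stmt5Aux.cc α β := by
    simp only [hsq]
    rw [← intervalIntegral.integral_Iic_add_Ioi (b := (0:ℝ)) hintff.integrableOn
      hintff.integrableOn, e1, e2, Stmt5Aux.FF_zero]
    ring
  rw [etot, ← Stmt5Aux.cc_def]
  ring
end

section
/- Let α, β > 0 and x₁, x₂ ∈ ℝ with y₁ = x + x₁, y₂ = x + x₂. Suppose 1 + e^{2(β y₂ + iα y₁)} ≠ 0 for all x in (-∞, x₀]. Then for the complex soliton Q(x) = 2√2 (β+iα) e^{β y₂ + iα y₁}/(1 + e^{2(β y₂ + iα y₁)}), one has (1/2)∫_{-∞}^{x₀} Q² = 2(β+iα) e^{2(β y₂ + iα y₁)} / (1 + e^{2(β y₂ + iα y₁)}) evaluated at x = x₀. -/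
open Complex MeasureTheory Set Filter Topology

lemma exp_mul_integrableOn_Iic {b : ℝ} (hb : 0 < b) (a : ℝ) :
    IntegrableOn (fun x : ℝ => Real.exp (b * x)) (Set.Iic a) := by
  apply integrableOn_Iic_of_intervalIntegral_norm_bounded (Real.exp (b * a) / b) a
    (fun i : ℝ => ((Real.continuous_exp.comp (continuous_const.mul continuous_id)).integrableOn_Ioc))
    Filter.tendsto_id
  filter_upwards with i
  simp only [Real.norm_eq_abs, Real.abs_exp, Function.comp, id, Pi.mul_apply]
  rw [intervalIntegral.integral_comp_mul_left (fun x => Real.exp x) hb.ne']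
  rw [integral_exp]
  rw [smul_eq_mul]
  rw [div_eq_inv_mul]
  gcongr
  simp [(Real.exp_pos _).le]

theorem stmt_6 (α β x₁ x₂ x₀ : ℝ) (hα : 0 < α) (hβ : 0 < β) (E Q : ℝ → ℂ)
    (hE : ∀ x : ℝ, E x = Complex.exp ((β : ℂ) * (x + x₂) + I * α * (x + x₁)))
    (hQ : ∀ x : ℝ, Q x = 2 * Real.sqrt 2 * ((β : ℂ) + I * α) * E x / (1 + (E x) ^ 2))
    (hden : ∀ x ≤ x₀, 1 + (E x) ^ 2 ≠ 0) :
    MeasureTheory.IntegrableOn (fun x : ℝ => Q x ^ 2) (Set.Iic x₀) ∧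
    (1 / 2 : ℂ) * ∫ x in Set.Iic x₀, Q x ^ 2 =
      2 * ((β : ℂ) + I * α) * (E x₀) ^ 2 / (1 + (E x₀) ^ 2) := by
  set c : ℂ := (β : ℂ) + I * α with hc
  have hEfun : E = fun x : ℝ => Complex.exp ((β : ℂ) * (x + x₂) + I * α * (x + x₁)) := funext hE
  -- derivative of E
  have hE' : ∀ x : ℝ, HasDerivAt E (c * E x) x := by
    intro x
    have h1 : HasDerivAt (fun z : ℂ => (β : ℂ) * (z + x₂) + I * α * (z + x₁)) c (x : ℂ) := by
      have := (((hasDerivAt_id (x : ℂ)).add_const (x₂ : ℂ)).const_mul (β : ℂ)).add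
        (((hasDerivAt_id (x : ℂ)).add_const (x₁ : ℂ)).const_mul (I * α))
      simpa [hc, mul_one, Pi.add_def] using this
    have h2 := (h1.cexp).comp_ofReal
    rw [hEfun]
    simpa [mul_comm] using h2
  -- continuity of E
  have hEc : Continuous E := by
    rw [hEfun]; fun_prop
  -- norm of E
  have hnorm : ∀ x : ℝ, ‖E x‖ = Real.exp (β * (x + x₂)) := by
    intro x
    rw [hE, Complex.norm_exp]
    congr 1
    simp [Complex.add_re, Complex.mul_re, Complex.I_re, Complex.I_im]
  -- E tends to 0 at -∞
  have hlin : Tendsto (fun x : ℝ => β * (x + x₂)) atBot atBot := by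
    apply Tendsto.const_mul_atBot hβ
    exact tendsto_atBot_add_const_right _ _ tendsto_id
  have hE0 : Tendsto E atBot (𝓝 0) := by
    rw [tendsto_zero_iff_norm_tendsto_zero]
    simp only [hnorm]
    exact Real.tendsto_exp_atBot.comp hlin
  have hE20 : Tendsto (fun x => (E x) ^ 2) atBot (𝓝 0) := by
    simpa using (hE0.pow 2)
  set F : ℝ → ℂ := fun x => 4 * c * (E x) ^ 2 / (1 + (E x) ^ 2) with hF
  have h8 : ((Real.sqrt 2 : ℝ) : ℂ) ^ 2 = 2 := by
    rw [← Complex.ofReal_pow, Real.sq_sqrt (by norm_num : (2:ℝ) ≥ 0)]; norm_num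
  have hF' : ∀ x ∈ Set.Iic x₀, HasDerivAt F (Q x ^ 2) x := by
    intro x hx
    have hne := hden x hx
    have hsq : HasDerivAt (fun x => (E x) ^ 2) (c * E x * E x + E x * (c * E x)) x := by
      simpa only [pow_two, Pi.mul_def] using (hE' x).mul (hE' x)
    have h1 : HasDerivAt (fun x => 4 * c * (E x) ^ 2) (4 * c * (c * E x * E x + E x * (c * E x))) x :=
      hsq.const_mul _
    have h2 : HasDerivAt (fun x => 1 + (E x) ^ 2) (c * E x * E x + E x * (c * E x)) x := hsq.const_add 1
    have h3 : HasDerivAt F ((4 * c * (c * E x * E x + E x * (c * E x)) * (1 + E x ^ 2) - 4 * c * E x ^ 2 * (c * E x * E x + E x * (c * E x))) / (1 + E x ^ 2) ^ 2) x := h1.div h2 hne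
    convert h3 using 1
    rw [hQ x, div_pow]
    rw [mul_pow, mul_pow, mul_pow, h8]
    field_simp
    ring
  have hFlim : Tendsto F atBot (𝓝 0) := by
    have h1 : Tendsto (fun x => 4 * c * (E x) ^ 2) atBot (𝓝 0) := by
      simpa using hE20.const_mul (4 * c)
    have h2 : Tendsto (fun x => 1 + (E x) ^ 2) atBot (𝓝 (1 : ℂ)) := by
      simpa using hE20.const_add (1 : ℂ)
    rw [hF]; simpa [Pi.div_def] using h1.div h2 one_ne_zero
  -- lower bound on the denominator
  have habs2 : Tendsto (fun x => ‖E x‖ ^ 2) atBot (𝓝 0) := by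
    have := hE20.norm
    simpa [norm_pow] using this
  obtain ⟨M, hM⟩ := (eventually_atBot).1 (habs2.eventually_lt_const (by norm_num : (0:ℝ) < 1/2))
  set M' := min M x₀ with hM'
  have hM'le : M' ≤ x₀ := min_le_right _ _
  have hg : Continuous fun x => ‖1 + (E x) ^ 2‖ :=
    continuous_norm.comp (by fun_prop)
  obtain ⟨z, hz, hzmin0⟩ := (isCompact_Icc (a := M') (b := x₀)).exists_isMinOn
    (Set.nonempty_Icc.2 hM'le) hg.continuousOn
  have hzmin : ∀ y ∈ Icc M' x₀, ‖1 + (E z) ^ 2‖ ≤ ‖1 + (E y) ^ 2‖ :=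
    fun y hy => hzmin0 hy
  set δ : ℝ := min (1/2) (‖1 + (E z) ^ 2‖) with hδdef
  have hδ : 0 < δ := by
    apply lt_min (by norm_num)
    exact norm_pos_iff.mpr (hden z hz.2)
  have hlow : ∀ x ≤ x₀, δ ≤ ‖1 + (E x) ^ 2‖ := by
    intro x hx
    rcases le_total x M' with h | h
    · have h1 : ‖E x‖ ^ 2 < 1/2 := hM x (h.trans (min_le_left _ _))
      have h2 : (1 : ℝ) ≤ ‖1 + (E x) ^ 2‖ + ‖(E x) ^ 2‖ := by
        calc (1 : ℝ) = ‖(1 + (E x) ^ 2) + (-(E x) ^ 2)‖ := by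
              norm_num
          _ ≤ _ := by
              apply (norm_add_le _ _).trans
              simp
      have h3 : ‖(E x) ^ 2‖ = ‖E x‖ ^ 2 := norm_pow _ _
      calc δ ≤ 1/2 := min_le_left _ _
        _ ≤ ‖1 + (E x) ^ 2‖ := by nlinarith
    · exact (min_le_right _ _).trans (hzmin x ⟨h, hx⟩)
  -- integrability
  set C : ℝ := 8 * ‖c‖ ^ 2 * Real.exp (2 * β * x₂) / δ ^ 2 with hC
  have hbound : ∀ x ∈ Set.Iic x₀, ‖Q x ^ 2‖ ≤ C * Real.exp ((2 * β) * x) := by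
    intro x hx
    rw [hQ x]
    simp only [norm_pow, norm_div, norm_mul]
    rw [hnorm x]
    have hd := hlow x hx
    have habs2' : ‖(2 : ℂ)‖ = 2 := by simp
    rw [div_pow, mul_pow, mul_pow, mul_pow]
    rw [hC]
    have hexp : Real.exp (β * (x + x₂)) ^ 2 = Real.exp (2 * β * x₂) * Real.exp ((2 * β) * x) := by
      rw [← Real.exp_nat_mul, ← Real.exp_add]; ring_nf
    rw [habs2']
    have habsr : ‖((Real.sqrt 2 : ℝ) : ℂ)‖ = Real.sqrt 2 := by
      simp [Real.sqrt_nonneg]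
    rw [habsr, Real.sq_sqrt (by norm_num : (2:ℝ) ≥ 0)]
    rw [hexp]
    calc 2 ^ 2 * 2 * ‖c‖ ^ 2 * (Real.exp (2 * β * x₂) * Real.exp (2 * β * x)) /
          ‖1 + E x ^ 2‖ ^ 2
        ≤ 2 ^ 2 * 2 * ‖c‖ ^ 2 * (Real.exp (2 * β * x₂) * Real.exp (2 * β * x)) /
          δ ^ 2 := by
          gcongr
      _ = 8 * ‖c‖ ^ 2 * Real.exp (2 * β * x₂) / δ ^ 2 * Real.exp (2 * β * x) := by
          field_simp
          ring
  have hQcont : ContinuousOn (fun x : ℝ => Q x ^ 2) (Set.Iic x₀) := by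
    have : ContinuousOn Q (Set.Iic x₀) := by
      have h1 : Q = fun x => 2 * Real.sqrt 2 * c * E x / (1 + (E x) ^ 2) := funext hQ
      rw [h1]
      exact ContinuousOn.div (by fun_prop) (by fun_prop) (fun x hx => hden x hx)
    exact this.pow 2
  have hint : IntegrableOn (fun x : ℝ => Q x ^ 2) (Set.Iic x₀) := by
    apply Integrable.mono' ((exp_mul_integrableOn_Iic (by positivity : (0:ℝ) < 2*β) x₀).const_mul C)
    · exact hQcont.aestronglyMeasurable measurableSet_Iic
    · rw [ae_restrict_iff' measurableSet_Iic]
      filter_upwards with x hx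
      exact hbound x hx
  refine ⟨hint, ?_⟩
  have hkey := integral_Iic_of_hasDerivAt_of_tendsto' hF' hint hFlim
  rw [hkey]
  simp only [hF, sub_zero]
  ring
end

section
/- Fix α, β > 0 and x₁, x₂ ∈ ℝ, y₁ = x + x₁, y₂ = x + x₂. Define Θ₁(x) = (β/α) sin(α y₁)/cosh(β y₂) (real-valued) and Θ₂(x) = e^{β y₂ + i α y₁} (complex-valued). Then for all x ∈ ℝ: (1 + Θ₂²)Θ₁' - (1 + Θ₁²)Θ₂' - (β - iα)(Θ₁ - Θ₁²Θ₂ + Θ₂ - Θ₂²Θ₁) = 0, where primes denote derivatives in x. -/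
set_option maxHeartbeats 1000000

open Complex

theorem stmt_11 (α β x₁ x₂ : ℝ) (hα : 0 < α) (hβ : 0 < β) (Θ₁ Θ₂ : ℝ → ℂ)
    (hΘ₁ : ∀ x : ℝ, Θ₁ x =
      (((β / α) * Real.sin (α * (x + x₁)) / Real.cosh (β * (x + x₂)) : ℝ) : ℂ))
    (hΘ₂ : ∀ x : ℝ, Θ₂ x = Complex.exp ((β : ℂ) * (x + x₂) + I * α * (x + x₁))) :
    ∀ x : ℝ,
      (1 + Θ₂ x ^ 2) * deriv Θ₁ x - (1 + Θ₁ x ^ 2) * deriv Θ₂ x -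
        ((β : ℂ) - I * α) * (Θ₁ x - Θ₁ x ^ 2 * Θ₂ x + Θ₂ x - Θ₂ x ^ 2 * Θ₁ x) = 0 := by
  intro x
  have hα' : (α : ℝ) ≠ 0 := ne_of_gt hα
  have hch : Real.cosh (β * (x + x₂)) ≠ 0 := (Real.cosh_pos _).ne'
  -- derivative of Θ₁
  have hs : HasDerivAt (fun x : ℝ => (β / α) * Real.sin (α * (x + x₁)))
      ((β / α) * (Real.cos (α * (x + x₁)) * α)) x := by
    have hin : HasDerivAt (fun x : ℝ => α * (x + x₁)) α x := by
      simpa using ((hasDerivAt_id x).add_const x₁).const_mul α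
    exact ((Real.hasDerivAt_sin _).comp x hin).const_mul (β / α)
  have hc : HasDerivAt (fun x : ℝ => Real.cosh (β * (x + x₂)))
      (Real.sinh (β * (x + x₂)) * β) x := by
    have hin : HasDerivAt (fun x : ℝ => β * (x + x₂)) β x := by
      simpa using ((hasDerivAt_id x).add_const x₂).const_mul β
    exact (Real.hasDerivAt_cosh _).comp x hin
  have h1 : HasDerivAt Θ₁
      ((((β / α) * (Real.cos (α * (x + x₁)) * α) * Real.cosh (β * (x + x₂)) -
        (β / α) * Real.sin (α * (x + x₁)) * (Real.sinh (β * (x + x₂)) * β)) /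
        (Real.cosh (β * (x + x₂)))^2 : ℝ) : ℂ) x := by
    have := (hs.div hc hch).ofReal_comp
    simpa [funext hΘ₁] using this
  -- derivative of Θ₂
  have hid : HasDerivAt (fun x : ℝ => (x : ℂ)) 1 x := (hasDerivAt_id x).ofReal_comp
  have hin2 : HasDerivAt (fun x : ℝ => (β : ℂ) * ((x : ℂ) + (x₂ : ℂ)) + I * α * ((x : ℂ) + (x₁ : ℂ)))
      ((β : ℂ) + I * α) x := by
    have ha := ((hid.add_const (x₂ : ℂ)).const_mul (β : ℂ))
    have hb := ((hid.add_const (x₁ : ℂ)).const_mul (I * α))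
    have hab := ha.add hb
    simp only [mul_one] at hab
    exact hab
  have h2 : HasDerivAt Θ₂ (Complex.exp ((β : ℂ) * (x + x₂) + I * α * (x + x₁)) * ((β : ℂ) + I * α)) x := by
    have := hin2.cexp
    simpa [funext hΘ₂] using this
  rw [h1.deriv, h2.deriv, hΘ₁ x, hΘ₂ x]
  push_cast
  -- exponentials
  set u : ℂ := Complex.exp ((α : ℂ) * ((x : ℂ) + (x₁ : ℂ)) * I) with hu_def
  set v : ℂ := Complex.exp ((β : ℂ) * ((x : ℂ) + (x₂ : ℂ))) with hv_def
  have hu : u ≠ 0 := Complex.exp_ne_zero _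
  have hv : v ≠ 0 := Complex.exp_ne_zero _
  have hΘ₂x : Complex.exp ((β : ℂ) * ((x : ℂ) + (x₂ : ℂ)) + I * α * ((x : ℂ) + (x₁ : ℂ))) = v * u := by
    rw [Complex.exp_add, hu_def, hv_def,
      show I * (α : ℂ) * ((x : ℂ) + (x₁ : ℂ)) = (α : ℂ) * ((x : ℂ) + (x₁ : ℂ)) * I from by ring]
  have hsin : Complex.sin ((α : ℂ) * ((x : ℂ) + (x₁ : ℂ))) = (u⁻¹ - u) * I / 2 := by
    rw [Complex.sin, neg_mul, Complex.exp_neg]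
  have hcos : Complex.cos ((α : ℂ) * ((x : ℂ) + (x₁ : ℂ))) = (u + u⁻¹) / 2 := by
    rw [Complex.cos, neg_mul, Complex.exp_neg]
  have hcosh : Complex.cosh ((β : ℂ) * ((x : ℂ) + (x₂ : ℂ))) = (v + v⁻¹) / 2 := by
    rw [Complex.cosh, Complex.exp_neg]
  have hsinh : Complex.sinh ((β : ℂ) * ((x : ℂ) + (x₂ : ℂ))) = (v - v⁻¹) / 2 := by
    rw [Complex.sinh, Complex.exp_neg]
  have hcc : Complex.cosh ((β : ℂ) * ((x : ℂ) + (x₂ : ℂ))) ≠ 0 := by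
    have h := Complex.ofReal_ne_zero.2 hch
    rw [Complex.ofReal_cosh] at h
    push_cast at h
    exact h
  have hα'' : (α : ℂ) ≠ 0 := by exact_mod_cast hα'
  rw [hΘ₂x]
  have huw : u * u⁻¹ = 1 := mul_inv_cancel₀ hu
  have hvz : v * v⁻¹ = 1 := mul_inv_cancel₀ hv
  have hI : Complex.I ^ 2 = -1 := Complex.I_sq
  have hS : Complex.sin ((α : ℂ) * ((x : ℂ) + (x₁ : ℂ))) * 2 = (u⁻¹ - u) * Complex.I := by
    rw [hsin]; ring
  have hCo : Complex.cos ((α : ℂ) * ((x : ℂ) + (x₁ : ℂ))) * 2 = u + u⁻¹ := by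
    rw [hcos]; ring
  have hCh : Complex.cosh ((β : ℂ) * ((x : ℂ) + (x₂ : ℂ))) * 2 = v + v⁻¹ := by
    rw [hcosh]; ring
  have hSh : Complex.sinh ((β : ℂ) * ((x : ℂ) + (x₂ : ℂ))) * 2 = v - v⁻¹ := by
    rw [hsinh]; ring
  have ha1 : (α : ℂ) * ((α : ℂ))⁻¹ = 1 := mul_inv_cancel₀ hα''
  have hc1 : Complex.cosh ((β : ℂ) * ((x : ℂ) + (x₂ : ℂ))) *
      (Complex.cosh ((β : ℂ) * ((x : ℂ) + (x₂ : ℂ))))⁻¹ = 1 := mul_inv_cancel₀ hcc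
  have hQ : ((α : ℂ)) ^ 2 * (Complex.cosh ((β : ℂ) * ((x : ℂ) + (x₂ : ℂ)))) ^ 2 ≠ 0 :=
    mul_ne_zero (pow_ne_zero 2 hα'') (pow_ne_zero 2 hcc)
  refine mul_right_cancel₀ hQ ?_
  linear_combination
    (1 * (Complex.cos ((α:ℂ) * ((x:ℂ) + (x₁:ℂ)))) * (Complex.cosh ((β:ℂ) * ((x:ℂ) + (x₂:ℂ))))^3 * ((α:ℂ))^2 * ((β:ℂ)) * ((Complex.cosh ((β:ℂ) * ((x:ℂ) + (x₂:ℂ))))⁻¹)^2 + 1 * (Complex.cos ((α:ℂ) * ((x:ℂ) + (x₁:ℂ)))) * (Complex.cosh ((β:ℂ) * ((x:ℂ) + (x₂:ℂ))))^3 * (u)^2 * (v)^2 * ((α:ℂ))^2 * ((β:ℂ)) * ((Complex.cosh ((β:ℂ) * ((x:ℂ) + (x₂:ℂ))))⁻¹)^2 + -1 * (Complex.sin ((α:ℂ) * ((x:ℂ) + (x₁:ℂ)))) * (Complex.cosh ((β:ℂ) * ((x:ℂ) + (x₂:ℂ))))^2 * ((α:ℂ)) * ((β:ℂ))^2 * ((Complex.cosh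 ((β:ℂ) * ((x:ℂ) + (x₂:ℂ))))⁻¹) + 1 * (Complex.sin ((α:ℂ) * ((x:ℂ) + (x₁:ℂ)))) * (Complex.cosh ((β:ℂ) * ((x:ℂ) + (x₂:ℂ))))^2 * (Complex.I) * ((α:ℂ))^2 * ((β:ℂ)) * ((Complex.cosh ((β:ℂ) * ((x:ℂ) + (x₂:ℂ))))⁻¹) + 1 * (Complex.sin ((α:ℂ) * ((x:ℂ) + (x₁:ℂ)))) * (Complex.cosh ((β:ℂ) * ((x:ℂ) + (x₂:ℂ))))^2 * (u)^2 * (v)^2 * ((α:ℂ)) * ((β:ℂ))^2 * ((Complex.cosh ((β:ℂ) * ((x:ℂ) + (x₂:ℂ))))⁻¹) + -1 * (Complex.sin ((α:ℂ) * ((x:ℂ) + (x₁:ℂ)))) * (Complex.cosh ((β:ℂ) * ((x:ℂ) + (x₂:ℂ))))^2 * (u)^2 * (v)^2 * (Complex.I) * ((α:ℂ))^2 * ((β:ℂ)) * ((Complex.cosh ((β:ℂ) * ((x:ℂ) + (x₂:ℂ))))⁻¹) + -1 * (Complex.sin ((α:ℂ) * ((x:ℂ) + (x₁:ℂ)))) *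 (Complex.cosh ((β:ℂ) * ((x:ℂ) + (x₂:ℂ))))^2 * (Complex.sinh ((β:ℂ) * ((x:ℂ) + (x₂:ℂ)))) * ((α:ℂ)) * ((β:ℂ))^2 * ((Complex.cosh ((β:ℂ) * ((x:ℂ) + (x₂:ℂ))))⁻¹)^2 + -1 * (Complex.sin ((α:ℂ) * ((x:ℂ) + (x₁:ℂ)))) * (Complex.cosh ((β:ℂ) * ((x:ℂ) + (x₂:ℂ))))^2 * (Complex.sinh ((β:ℂ) * ((x:ℂ) + (x₂:ℂ)))) * (u)^2 * (v)^2 * ((α:ℂ)) * ((β:ℂ))^2 * ((Complex.cosh ((β:ℂ) * ((x:ℂ) + (x₂:ℂ))))⁻¹)^2 + -2 * (Complex.sin ((α:ℂ) * ((x:ℂ) + (x₁:ℂ))))^2 * (Complex.cosh ((β:ℂ) * ((x:ℂ) + (x₂:ℂ))))^2 * (u) * (v) * (Complex.I) * ((α:ℂ)) * ((β:ℂ))^2 * ((Complex.cosh ((β:ℂ) * ((x:ℂ) + (x₂:ℂ))))⁻¹)^2 + -2 * (Complex.sin ((α:ℂ) * ((x:ℂ) + (x₁:ℂ))))^2 *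 (Complex.cosh ((β:ℂ) * ((x:ℂ) + (x₂:ℂ))))^2 * (u) * (v) * (Complex.I) * ((α:ℂ))^2 * ((α:ℂ)⁻¹) * ((β:ℂ))^2 * ((Complex.cosh ((β:ℂ) * ((x:ℂ) + (x₂:ℂ))))⁻¹)^2) * ha1 +
    (1 * (Complex.cos ((α:ℂ) * ((x:ℂ) + (x₁:ℂ)))) * (Complex.cosh ((β:ℂ) * ((x:ℂ) + (x₂:ℂ)))) * ((α:ℂ))^2 * ((β:ℂ)) + 1 * (Complex.cos ((α:ℂ) * ((x:ℂ) + (x₁:ℂ)))) * (Complex.cosh ((β:ℂ) * ((x:ℂ) + (x₂:ℂ)))) * (u)^2 * (v)^2 * ((α:ℂ))^2 * ((β:ℂ)) + 1 * (Complex.cos ((α:ℂ) * ((x:ℂ) + (x₁:ℂ)))) * (Complex.cosh ((β:ℂ) * ((x:ℂ) + (x₂:ℂ))))^2 * ((α:ℂ))^2 * ((β:ℂ)) * ((Complex.cosh ((β:ℂ) * ((x:ℂ) + (x₂:ℂ))))⁻¹) + 1 * (Complex.cos ((α:ℂ) * ((x:ℂ) + (x₁:ℂ)))) * (Complex.cosh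 ((β:ℂ) * ((x:ℂ) + (x₂:ℂ))))^2 * (u)^2 * (v)^2 * ((α:ℂ))^2 * ((β:ℂ)) * ((Complex.cosh ((β:ℂ) * ((x:ℂ) + (x₂:ℂ))))⁻¹) + -1 * (Complex.sin ((α:ℂ) * ((x:ℂ) + (x₁:ℂ)))) * (Complex.sinh ((β:ℂ) * ((x:ℂ) + (x₂:ℂ)))) * ((α:ℂ)) * ((β:ℂ))^2 + -1 * (Complex.sin ((α:ℂ) * ((x:ℂ) + (x₁:ℂ)))) * (Complex.sinh ((β:ℂ) * ((x:ℂ) + (x₂:ℂ)))) * (u)^2 * (v)^2 * ((α:ℂ)) * ((β:ℂ))^2 + -1 * (Complex.sin ((α:ℂ) * ((x:ℂ) + (x₁:ℂ)))) * (Complex.cosh ((β:ℂ) * ((x:ℂ) + (x₂:ℂ)))) * ((α:ℂ)) * ((β:ℂ))^2 + 1 * (Complex.sin ((α:ℂ) * ((x:ℂ) + (x₁:ℂ)))) * (Complex.cosh ((β:ℂ) * ((x:ℂ) + (x₂:ℂ)))) * (Complex.I) * ((α:ℂ))^2 * ((β:ℂ)) + 1 * (Complex.sin ((α:ℂ) *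 ((x:ℂ) + (x₁:ℂ)))) * (Complex.cosh ((β:ℂ) * ((x:ℂ) + (x₂:ℂ)))) * (u)^2 * (v)^2 * ((α:ℂ)) * ((β:ℂ))^2 + -1 * (Complex.sin ((α:ℂ) * ((x:ℂ) + (x₁:ℂ)))) * (Complex.cosh ((β:ℂ) * ((x:ℂ) + (x₂:ℂ)))) * (u)^2 * (v)^2 * (Complex.I) * ((α:ℂ))^2 * ((β:ℂ)) + -1 * (Complex.sin ((α:ℂ) * ((x:ℂ) + (x₁:ℂ)))) * (Complex.cosh ((β:ℂ) * ((x:ℂ) + (x₂:ℂ)))) * (Complex.sinh ((β:ℂ) * ((x:ℂ) + (x₂:ℂ)))) * ((α:ℂ)) * ((β:ℂ))^2 * ((Complex.cosh ((β:ℂ) * ((x:ℂ) + (x₂:ℂ))))⁻¹) + -1 * (Complex.sin ((α:ℂ) * ((x:ℂ) + (x₁:ℂ)))) * (Complex.cosh ((β:ℂ) * ((x:ℂ) + (x₂:ℂ)))) * (Complex.sinh ((β:ℂ) * ((x:ℂ) + (x₂:ℂ)))) * (u)^2 * (v)^2 * ((α:ℂ)) * ((β:ℂ))^2 * ((Complex.cosh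 ((β:ℂ) * ((x:ℂ) + (x₂:ℂ))))⁻¹) + -2 * (Complex.sin ((α:ℂ) * ((x:ℂ) + (x₁:ℂ))))^2 * (u) * (v) * (Complex.I) * ((α:ℂ)) * ((β:ℂ))^2 + -2 * (Complex.sin ((α:ℂ) * ((x:ℂ) + (x₁:ℂ))))^2 * (Complex.cosh ((β:ℂ) * ((x:ℂ) + (x₂:ℂ)))) * (u) * (v) * (Complex.I) * ((α:ℂ)) * ((β:ℂ))^2 * ((Complex.cosh ((β:ℂ) * ((x:ℂ) + (x₂:ℂ))))⁻¹)) * hc1 +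
    ((-1/2) * (u) * (u⁻¹) * (v) * (Complex.I)^2 * ((α:ℂ)) * ((β:ℂ))^2 + (1/2) * (u)^2 * (v) * (Complex.I)^2 * ((α:ℂ)) * ((β:ℂ))^2 + (-1/2) * (Complex.sinh ((β:ℂ) * ((x:ℂ) + (x₂:ℂ)))) * ((α:ℂ)) * ((β:ℂ))^2 + (-1/2) * (Complex.sinh ((β:ℂ) * ((x:ℂ) + (x₂:ℂ)))) * (u)^2 * (v)^2 * ((α:ℂ)) * ((β:ℂ))^2 + (-1/2) * (Complex.cosh ((β:ℂ) * ((x:ℂ) + (x₂:ℂ)))) * ((α:ℂ)) * ((β:ℂ))^2 + (1/2) * (Complex.cosh ((β:ℂ) * ((x:ℂ) + (x₂:ℂ)))) * (Complex.I) * ((α:ℂ))^2 * ((β:ℂ)) + (1/2) * (Complex.cosh ((β:ℂ) * ((x:ℂ) + (x₂:ℂ)))) * (u)^2 * (v)^2 * ((α:ℂ)) * ((β:ℂ))^2 + (-1/2) * (Complex.cosh ((β:ℂ) * ((x:ℂ) + (x₂:ℂ)))) * (u)^2 * (v)^2 * (Complex.I) * ((α:ℂ))^2 * ((β:ℂ))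 + -1 * (Complex.sin ((α:ℂ) * ((x:ℂ) + (x₁:ℂ)))) * (u) * (v) * (Complex.I) * ((α:ℂ)) * ((β:ℂ))^2) * hS +
    ((1/2) * (Complex.cosh ((β:ℂ) * ((x:ℂ) + (x₂:ℂ)))) * ((α:ℂ))^2 * ((β:ℂ)) + (1/2) * (Complex.cosh ((β:ℂ) * ((x:ℂ) + (x₂:ℂ)))) * (u)^2 * (v)^2 * ((α:ℂ))^2 * ((β:ℂ))) * hCo +
    ((-1/4) * (u⁻¹) * (Complex.I) * ((α:ℂ)) * ((β:ℂ))^2 + (1/4) * (u) * (Complex.I) * ((α:ℂ)) * ((β:ℂ))^2 + (-1/4) * (u)^2 * (u⁻¹) * (v)^2 * (Complex.I) * ((α:ℂ)) * ((β:ℂ))^2 + (1/4) * (u)^3 * (v)^2 * (Complex.I) * ((α:ℂ)) * ((β:ℂ))^2) * hSh +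
    ((1/4) * (u⁻¹) * ((α:ℂ))^2 * ((β:ℂ)) + (-1/4) * (u⁻¹) * (Complex.I) * ((α:ℂ)) * ((β:ℂ))^2 + (1/4) * (u⁻¹) * (Complex.I)^2 * ((α:ℂ))^2 * ((β:ℂ)) + (1/4) * (u) * ((α:ℂ))^2 * ((β:ℂ)) + (1/4) * (u) * (Complex.I) * ((α:ℂ)) * ((β:ℂ))^2 + (-1/4) * (u) * (Complex.I)^2 * ((α:ℂ))^2 * ((β:ℂ)) + (-1/2) * (u) * (v) * (v⁻¹) * ((α:ℂ))^2 * ((β:ℂ)) + (-1/2) * (u) * (v)^2 * ((α:ℂ))^2 * ((β:ℂ)) + (1/4) * (u)^2 * (u⁻¹) * (v)^2 * ((α:ℂ))^2 * ((β:ℂ)) + (1/4) * (u)^2 * (u⁻¹) * (v)^2 * (Complex.I) * ((α:ℂ)) * ((β:ℂ))^2 + (-1/4) * (u)^2 * (u⁻¹) * (v)^2 * (Complex.I)^2 * ((α:ℂ))^2 * ((β:ℂ)) + (1/4) * (u)^3 * (v)^2 * ((α:ℂ))^2 * ((β:ℂ)) + (-1/4) * (u)^3 * (v)^2 * (Complex.I)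 * ((α:ℂ)) * ((β:ℂ))^2 + (1/4) * (u)^3 * (v)^2 * (Complex.I)^2 * ((α:ℂ))^2 * ((β:ℂ)) + -1 * (Complex.cosh ((β:ℂ) * ((x:ℂ) + (x₂:ℂ)))) * (u) * (v) * ((α:ℂ))^2 * ((β:ℂ))) * hCh +
    ((-1/2) * (u⁻¹) * (v) * (Complex.I)^3 * ((α:ℂ)) * ((β:ℂ))^2 + 1 * (u) * (v) * (Complex.I)^3 * ((α:ℂ)) * ((β:ℂ))^2 + (1/4) * (u) * (v)^2 * (v⁻¹) * ((α:ℂ))^2 * ((β:ℂ)) + (1/2) * (u) * (v)^2 * (v⁻¹) * (Complex.I) * ((α:ℂ)) * ((β:ℂ))^2 + (-1/4) * (u) * (v)^2 * (v⁻¹) * (Complex.I)^2 * ((α:ℂ))^2 * ((β:ℂ)) + (1/4) * (u) * (v)^3 * ((α:ℂ))^2 * ((β:ℂ)) + (-1/4) * (u) * (v)^3 * (Complex.I)^2 * ((α:ℂ))^2 * ((β:ℂ))) * huw +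
    ((-1/2) * (u) * (v⁻¹) * ((α:ℂ))^2 * ((β:ℂ)) + (-3/4) * (u) * (v) * ((α:ℂ))^2 * ((β:ℂ)) + (1/2) * (u) * (v) * (Complex.I) * ((α:ℂ)) * ((β:ℂ))^2 + (-1/4) * (u) * (v) * (Complex.I)^2 * ((α:ℂ))^2 * ((β:ℂ)) + (1/4) * (u)^3 * (v) * ((α:ℂ))^2 * ((β:ℂ)) + (-1/2) * (u)^3 * (v) * (Complex.I) * ((α:ℂ)) * ((β:ℂ))^2 + (1/4) * (u)^3 * (v) * (Complex.I)^2 * ((α:ℂ))^2 * ((β:ℂ))) * hvz +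
    ((1/4) * (u⁻¹) * (v⁻¹) * ((α:ℂ))^2 * ((β:ℂ)) + (1/4) * (u⁻¹) * (v) * ((α:ℂ))^2 * ((β:ℂ)) + (-1/2) * (u⁻¹) * (v) * (Complex.I) * ((α:ℂ)) * ((β:ℂ))^2 + (-1/4) * (u) * (v⁻¹) * ((α:ℂ))^2 * ((β:ℂ)) + (-1/2) * (u) * (v) * ((α:ℂ))^2 * ((β:ℂ)) + 1 * (u) * (v) * (Complex.I) * ((α:ℂ)) * ((β:ℂ))^2 + (-1/4) * (u) * (v)^3 * ((α:ℂ))^2 * ((β:ℂ)) + (1/4) * (u)^3 * (v) * ((α:ℂ))^2 * ((β:ℂ)) + (-1/2) * (u)^3 * (v) * (Complex.I) * ((α:ℂ)) * ((β:ℂ))^2 + (1/4) * (u)^3 * (v)^3 * ((α:ℂ))^2 * ((β:ℂ))) * hI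
end

section
/- Let m ∈ ℂ and let ũ, ṽ : ℝ → ℂ be twice differentiable with u = ũ', v = ṽ'. Assume the Bäcklund relation (u - v)/√2 = m sin((ũ + ṽ)/√2) holds on ℝ. Then for all x: u'(x)² - v'(x)² = m cos((ũ+ṽ)/√2) · (u² + v²)'(x) - √2 m³ cos²((ũ+ṽ)/√2) sin((ũ+ṽ)/√2) · (u(x) + v(x)). -/
open Complex

theorem stmt_17 (m : ℂ) (U V : ℝ → ℂ)
    (hu : Differentiable ℝ U) (hv : Differentiable ℝ V)
    (hu' : Differentiable ℝ (deriv U)) (hv' : Differentiable ℝ (deriv V))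
    (hB : ∀ x : ℝ, (deriv U x - deriv V x) / (Real.sqrt 2 : ℂ) =
      m * Complex.sin ((U x + V x) / (Real.sqrt 2 : ℂ))) :
    ∀ x : ℝ,
      deriv (deriv U) x ^ 2 - deriv (deriv V) x ^ 2 =
        m * Complex.cos ((U x + V x) / (Real.sqrt 2 : ℂ)) *
            deriv (fun y => deriv U y ^ 2 + deriv V y ^ 2) x -
          (Real.sqrt 2 : ℂ) * m ^ 3 * Complex.cos ((U x + V x) / (Real.sqrt 2 : ℂ)) ^ 2 *
            Complex.sin ((U x + V x) / (Real.sqrt 2 : ℂ)) * (deriv U x + deriv V x) := by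
  intro x
  set s2 : ℂ := (Real.sqrt 2 : ℂ) with hs2def
  have hs2 : s2 ≠ 0 := by
    simp [hs2def, Complex.ofReal_ne_zero]
  -- derivative of the sum-of-squares term
  have hsqU : HasDerivAt (fun y => deriv U y ^ 2)
      (deriv (deriv U) x * deriv U x + deriv U x * deriv (deriv U) x) x := by
    have h := (hu' x).hasDerivAt.mul (hu' x).hasDerivAt
    simp only [pow_two]; exact h
  have hsqV : HasDerivAt (fun y => deriv V y ^ 2)
      (deriv (deriv V) x * deriv V x + deriv V x * deriv (deriv V) x) x := by
    have h := (hv' x).hasDerivAt.mul (hv' x).hasDerivAt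
    simp only [pow_two]; exact h
  have hsq' : deriv (fun y => deriv U y ^ 2 + deriv V y ^ 2) x
      = 2 * deriv U x * deriv (deriv U) x + 2 * deriv V x * deriv (deriv V) x := by
    have : deriv (fun y => deriv U y ^ 2 + deriv V y ^ 2) x = _ := (hsqU.add hsqV).deriv
    rw [this]; ring
  rw [hsq']
  -- differentiate the Bäcklund relation
  have hL : HasDerivAt (fun y => (deriv U y - deriv V y) / s2)
      ((deriv (deriv U) x - deriv (deriv V) x) / s2) x :=
    ((hu' x).hasDerivAt.sub (hv' x).hasDerivAt).div_const s2
  have hin : HasDerivAt (fun y => (U y + V y) / s2)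
      ((deriv U x + deriv V x) / s2) x :=
    ((hu x).hasDerivAt.add (hv x).hasDerivAt).div_const s2
  have hsin : HasDerivAt (fun y : ℝ => Complex.sin ((U y + V y) / s2))
      (Complex.cos ((U x + V x) / s2) * ((deriv U x + deriv V x) / s2)) x :=
    by have := (Complex.hasDerivAt_sin ((U x + V x) / s2)).comp x hin; exact this
  have hR : HasDerivAt (fun y : ℝ => m * Complex.sin ((U y + V y) / s2))
      (m * (Complex.cos ((U x + V x) / s2) * ((deriv U x + deriv V x) / s2))) x :=
    hsin.const_mul m
  have heq : (fun y : ℝ => (deriv U y - deriv V y) / s2)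
      = (fun y : ℝ => m * Complex.sin ((U y + V y) / s2)) := funext fun y => hB y
  have hderiv : (deriv (deriv U) x - deriv (deriv V) x) / s2
      = m * (Complex.cos ((U x + V x) / s2) * ((deriv U x + deriv V x) / s2)) := by
    rw [← hL.deriv, heq, hR.deriv]
  have h1 : deriv (deriv U) x - deriv (deriv V) x
      = m * Complex.cos ((U x + V x) / s2) * (deriv U x + deriv V x) := by
    field_simp at hderiv
    linear_combination hderiv
  have h2 : deriv U x - deriv V x = s2 * (m * Complex.sin ((U x + V x) / s2)) := by
    rw [← hB x]
    field_simp
  set A := deriv (deriv U) x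
  set B := deriv (deriv V) x
  set u := deriv U x
  set v := deriv V x
  set co := Complex.cos ((U x + V x) / s2)
  set si := Complex.sin ((U x + V x) / s2)
  linear_combination (A + B - m * co * (u - v)) * h1 + (-(m ^ 2 * co ^ 2 * (u + v))) * h2
end

section
/- Let κ₁, κ₂ ∈ ℂ with κ₁ ≠ κ₂ and κ₁ + κ₂ ≠ 0, and let ũ₀, ũ₁, ũ₃, ũ₁₂ : ℝ → ℂ be differentiable with derivatives u₀, u₁, u₃, u₁₂. Assume: (i) (u₁ - u₀)/√2 = κ₁ sin((ũ₁ + ũ₀)/√2); (ii) (u₁₂ - u₁)/√2 = κ₂ sin((ũ₁₂ + ũ₁)/√2); and (iii) tan((ũ₁₂ - ũ₀)/(2√2)) = -ℓ · tan((ũ₃ - ũ₁)/(2√2)) with ℓ = (κ₁ + κ₂)/(κ₁ - κ₂), all holding pointwise on a set where the tangents and cosines involved are defined and nonzero as needed. Then on that set, (u₃ - u₀)/√2 = κ₂ sin((ũ₃ + ũ₀)/√2). -/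
open Complex

private lemma key_alg (k1 k2 s p α β A B X : ℂ)
    (hs : s ≠ 0) (hca : Complex.cos α ≠ 0) (hcb : Complex.cos β ≠ 0)
    (hkm : k1 - k2 ≠ 0) (hkp : k1 + k2 ≠ 0)
    (hA : A = s * k1 * Complex.sin (2 * p))
    (hB : B = s * k2 * Complex.sin (2 * (p + α)))
    (hE3 : (A + B) / (2 * s) * (1 / Complex.cos α ^ 2) =
      -((k1 + k2) / (k1 - k2)) * ((X - A) / (2 * s) * (1 / Complex.cos β ^ 2)))
    (hE4 : Complex.sin α * Complex.cos β * (k1 - k2) +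
      Complex.sin β * Complex.cos α * (k1 + k2) = 0) :
    X = s * k2 * Complex.sin (2 * (p + β)) := by
  have hpa : Complex.sin α ^ 2 + Complex.cos α ^ 2 = 1 := Complex.sin_sq_add_cos_sq α
  have hpb : Complex.sin β ^ 2 + Complex.cos β ^ 2 = 1 := Complex.sin_sq_add_cos_sq β
  field_simp at hE3
  have hsinA : Complex.sin (2 * (p + α)) =
      Complex.sin (2 * p) * (2 * Complex.cos α ^ 2 - 1) +
        Complex.cos (2 * p) * (2 * Complex.sin α * Complex.cos α) := by
    rw [show (2 : ℂ) * (p + α) = 2 * p + 2 * α by ring, Complex.sin_add,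
      Complex.sin_two_mul α, Complex.cos_two_mul α]
  have hsinB : Complex.sin (2 * (p + β)) =
      Complex.sin (2 * p) * (2 * Complex.cos β ^ 2 - 1) +
        Complex.cos (2 * p) * (2 * Complex.sin β * Complex.cos β) := by
    rw [show (2 : ℂ) * (p + β) = 2 * p + 2 * β by ring, Complex.sin_add,
      Complex.sin_two_mul β, Complex.cos_two_mul β]
  rw [hsinB]
  rw [hsinA] at hB
  have hmul : 2 * s * ((k1 + k2) * Complex.cos α ^ 2) ≠ 0 := by
    exact mul_ne_zero (mul_ne_zero two_ne_zero hs) (mul_ne_zero hkp (pow_ne_zero 2 hca))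
  apply mul_right_cancel₀ hmul
  set SP := Complex.sin (2 * p)
  set CP := Complex.cos (2 * p)
  set sa := Complex.sin α
  set ca := Complex.cos α
  set sb := Complex.sin β
  set cb := Complex.cos β
  linear_combination (2 * s) * hE3 +
    (2 * s) * ((k1 + k2) * ca ^ 2 - cb ^ 2 * (k1 - k2)) * hA -
    (2 * s) * cb ^ 2 * (k1 - k2) * hB +
    (2 * s * s * (SP * (sb * ca * (k1 + k2) - sa * cb * (k1 - k2)) -
      2 * k2 * ca * cb * CP)) * hE4 +
    (2 * s * s * SP * (k1 - k2) ^ 2 * cb ^ 2) * hpa -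
    (2 * s * s * SP * (k1 + k2) ^ 2 * ca ^ 2) * hpb

theorem stmt_19 (κ₁ κ₂ : ℂ) (hκ : κ₁ ≠ κ₂) (hκ' : κ₁ + κ₂ ≠ 0)
    (U0 U1 U3 U12 : ℝ → ℂ)
    (h₀ : Differentiable ℝ U0) (h₁ : Differentiable ℝ U1)
    (h₃ : Differentiable ℝ U3) (h₁₂ : Differentiable ℝ U12)
    (S : Set ℝ) (hS : IsOpen S)
    (hcos₁ : ∀ x ∈ S, Complex.cos ((U12 x - U0 x) / (2 * (Real.sqrt 2 : ℂ))) ≠ 0)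
    (hcos₂ : ∀ x ∈ S, Complex.cos ((U3 x - U1 x) / (2 * (Real.sqrt 2 : ℂ))) ≠ 0)
    (hi : ∀ x ∈ S, (deriv U1 x - deriv U0 x) / (Real.sqrt 2 : ℂ) =
      κ₁ * Complex.sin ((U1 x + U0 x) / (Real.sqrt 2 : ℂ)))
    (hii : ∀ x ∈ S, (deriv U12 x - deriv U1 x) / (Real.sqrt 2 : ℂ) =
      κ₂ * Complex.sin ((U12 x + U1 x) / (Real.sqrt 2 : ℂ)))
    (hiii : ∀ x ∈ S, Complex.tan ((U12 x - U0 x) / (2 * (Real.sqrt 2 : ℂ))) =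
      -((κ₁ + κ₂) / (κ₁ - κ₂)) * Complex.tan ((U3 x - U1 x) / (2 * (Real.sqrt 2 : ℂ)))) :
    ∀ x ∈ S, (deriv U3 x - deriv U0 x) / (Real.sqrt 2 : ℂ) =
      κ₂ * Complex.sin ((U3 x + U0 x) / (Real.sqrt 2 : ℂ)) := by
  intro x hx
  have hs : (Real.sqrt 2 : ℂ) ≠ 0 := by
    simp only [ne_eq, Complex.ofReal_eq_zero]
    positivity
  set s : ℂ := (Real.sqrt 2 : ℂ) with hsdef
  have hkm : κ₁ - κ₂ ≠ 0 := sub_ne_zero.2 hκ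
  set α : ℂ := (U12 x - U0 x) / (2 * s) with hα
  set β : ℂ := (U3 x - U1 x) / (2 * s) with hβ
  have hca : Complex.cos α ≠ 0 := hcos₁ x hx
  have hcb : Complex.cos β ≠ 0 := hcos₂ x hx
  -- E4
  have hE4 : Complex.sin α * Complex.cos β * (κ₁ - κ₂) +
      Complex.sin β * Complex.cos α * (κ₁ + κ₂) = 0 := by
    have h := hiii x hx
    rw [Complex.tan_eq_sin_div_cos, Complex.tan_eq_sin_div_cos] at h
    rw [← hα, ← hβ] at h
    field_simp at h
    linear_combination h
  -- derivative of hiii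
  have hF : HasDerivAt (fun y => Complex.tan ((U12 y - U0 y) / (2 * s)))
      ((deriv U12 x - deriv U0 x) / (2 * s) * (1 / Complex.cos α ^ 2)) x := by
    have hinner : HasDerivAt (fun y => (U12 y - U0 y) / (2 * s))
        ((deriv U12 x - deriv U0 x) / (2 * s)) x :=
      (((h₁₂ x).hasDerivAt.sub (h₀ x).hasDerivAt)).div_const (2 * s)
    have htan := Complex.hasDerivAt_tan hca
    have := htan.scomp x hinner
    simpa [Function.comp_def, smul_eq_mul] using this
  have hG : HasDerivAt (fun y => -((κ₁ + κ₂) / (κ₁ - κ₂)) *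
        Complex.tan ((U3 y - U1 y) / (2 * s)))
      (-((κ₁ + κ₂) / (κ₁ - κ₂)) *
        ((deriv U3 x - deriv U1 x) / (2 * s) * (1 / Complex.cos β ^ 2))) x := by
    have hinner : HasDerivAt (fun y => (U3 y - U1 y) / (2 * s))
        ((deriv U3 x - deriv U1 x) / (2 * s)) x :=
      (((h₃ x).hasDerivAt.sub (h₁ x).hasDerivAt)).div_const (2 * s)
    have htan := Complex.hasDerivAt_tan hcb
    have h1 := htan.scomp x hinner
    have h2 : HasDerivAt (fun y => Complex.tan ((U3 y - U1 y) / (2 * s)))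
        ((deriv U3 x - deriv U1 x) / (2 * s) * (1 / Complex.cos β ^ 2)) x := by
      simpa [Function.comp_def, smul_eq_mul] using h1
    simpa [mul_comm] using h2.const_mul (-((κ₁ + κ₂) / (κ₁ - κ₂)))
  have heq : (fun y => Complex.tan ((U12 y - U0 y) / (2 * s))) =ᶠ[nhds x]
      (fun y => -((κ₁ + κ₂) / (κ₁ - κ₂)) * Complex.tan ((U3 y - U1 y) / (2 * s))) := by
    filter_upwards [hS.mem_nhds hx] with y hy using hiii y hy
  have hF' : HasDerivAt (fun y => -((κ₁ + κ₂) / (κ₁ - κ₂)) *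
        Complex.tan ((U3 y - U1 y) / (2 * s)))
      ((deriv U12 x - deriv U0 x) / (2 * s) * (1 / Complex.cos α ^ 2)) x :=
    (heq.hasDerivAt_iff).1 hF
  have hE3 : (deriv U12 x - deriv U0 x) / (2 * s) * (1 / Complex.cos α ^ 2) =
      -((κ₁ + κ₂) / (κ₁ - κ₂)) *
        ((deriv U3 x - deriv U1 x) / (2 * s) * (1 / Complex.cos β ^ 2)) :=
    hF'.unique hG
  -- set up algebra
  set p : ℂ := (U1 x + U0 x) / (2 * s) with hp
  have harg1 : (U1 x + U0 x) / s = 2 * p := by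
    rw [hp]; field_simp
  have harg2 : (U12 x + U1 x) / s = 2 * (p + α) := by
    rw [hp, hα]; field_simp; ring
  have harg3 : (U3 x + U0 x) / s = 2 * (p + β) := by
    rw [hp, hβ]; field_simp; ring
  have hA : deriv U1 x - deriv U0 x = s * κ₁ * Complex.sin (2 * p) := by
    have h := hi x hx
    rw [harg1] at h
    field_simp at h
    linear_combination h
  have hB : deriv U12 x - deriv U1 x = s * κ₂ * Complex.sin (2 * (p + α)) := by
    have h := hii x hx
    rw [harg2] at h
    field_simp at h
    linear_combination h
  have hE3' : ((deriv U1 x - deriv U0 x) + (deriv U12 x - deriv U1 x)) / (2 * s) *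
        (1 / Complex.cos α ^ 2) =
      -((κ₁ + κ₂) / (κ₁ - κ₂)) *
        (((deriv U3 x - deriv U0 x) - (deriv U1 x - deriv U0 x)) / (2 * s) *
          (1 / Complex.cos β ^ 2)) := by
    have : (deriv U1 x - deriv U0 x) + (deriv U12 x - deriv U1 x) =
        deriv U12 x - deriv U0 x := by ring
    rw [this]
    have : (deriv U3 x - deriv U0 x) - (deriv U1 x - deriv U0 x) =
        deriv U3 x - deriv U1 x := by ring
    rw [this]
    exact hE3
  have hX := key_alg κ₁ κ₂ s p α β (deriv U1 x - deriv U0 x) (deriv U12 x - deriv U1 x)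
    (deriv U3 x - deriv U0 x) hs hca hcb hkm hκ' hA hB hE3' hE4
  rw [harg3, hX]
  field_simp
end
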